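/- A connected linear algebraic group over ℂ cannot act nontrivially (by group morphisms of varieties) on an abelian variety; more precisely, any morphic action of the additive group ℂ (or of ℂ*) on a complex torus by holomorphic automorphisms homotopic to the identity factors through translations, and any such holomorphic action of ℂ on a compact complex torus with a fixed point is trivial. -/

import Mathlib

/-- A connected linear algebraic group (here: the additive group `ℂ`)
cannot act nontrivially on an abelian variety.  Precisely: let `A' = V ⧸ Λ` be a compact
complex torus and let `β` be an action of the additive group `ℂ` on `A'` by holomorphic
automorphisms homotopic to the identity, i.e. each `β t` lifts to a holomorphic map
`F t : V → V` which commutes with the lattice translations (`F t (x + l) = F t x + l`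
for `l ∈ Λ`; this says the induced action on `H₁(A',ℤ) ≅ Λ` is trivial, equivalently
`β t` is homotopic to the identity).  Then:
(1) the action factors through translations: each `β t` is a translation `x ↦ x + a`; and
(2) if moreover the action has `0` as a fixed point, then the action is trivial. -/
theorem stmt_1 {V : Type*} [NormedAddCommGroup V] [NormedSpace ℂ V] [FiniteDimensional ℂ V]
    (Λ : AddSubgroup V) (hΛdisc : DiscreteTopology Λ)
    (hΛfull : Submodule.span ℝ (Λ : Set V) = ⊤)
    (β : ℂ → (V ⧸ Λ) → (V ⧸ Λ))
    (hβ0 : β 0 = id)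
    (hβadd : ∀ s t : ℂ, β (s + t) = β s ∘ β t)
    (F : ℂ → V → V)
    (hF : ∀ t, Differentiable ℂ (F t))
    (hlift : ∀ t x, β t (QuotientAddGroup.mk x) = QuotientAddGroup.mk (F t x))
    (hper : ∀ t x, ∀ l ∈ Λ, F t (x + l) = F t x + l) :
    (∀ t : ℂ, ∃ a : V, ∀ x : V,
        β t (QuotientAddGroup.mk x) = QuotientAddGroup.mk (x + a)) ∧
    ((∀ t : ℂ, β t 0 = 0) → ∀ t : ℂ, β t = id) := by
  classical
  -- Set up the ℤ-lattice structure
  set L : Submodule ℤ V := AddSubgroup.toIntSubmodule Λ with hL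
  have hLset : (L : Set V) = (Λ : Set V) := rfl
  have : DiscreteTopology L := hΛdisc
  have : IsZLattice ℝ L := ⟨by rw [hLset, hΛfull]⟩
  have hfree : Module.Free ℤ L := ZLattice.module_free ℝ L
  have hfin : Module.Finite ℤ L := ZLattice.module_finite ℝ L
  let b : Module.Basis (Module.Free.ChooseBasisIndex ℤ L) ℤ L := Module.Free.chooseBasis ℤ L
  let bV := b.ofZLatticeBasis ℝ L
  have hspan : Submodule.span ℤ (Set.range bV) = L := b.ofZLatticeBasis_span ℝ
  -- Key: each `F t` is a translation
  have key : ∀ t : ℂ, ∀ x : V, F t x = x + F t 0 := by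
    intro t x
    set g : V → V := fun y => F t y - y with hg
    have hgdiff : Differentiable ℂ g := (hF t).sub differentiable_id
    have hgper : ∀ y : V, ∀ l ∈ Λ, g (y + l) = g y := by
      intro y l hl
      simp only [hg, hper t y l hl]
      abel
    -- `g` has bounded range: it is determined by its values on a fundamental domain
    have hbdd : Bornology.IsBounded (Set.range g) := by
      have hsub : Set.range g ⊆ g '' (closure (ZSpan.fundamentalDomain bV)) := by
        rintro _ ⟨y, rfl⟩
        obtain ⟨v, hv, -⟩ := ZSpan.exist_unique_vadd_mem_fundamentalDomain bV y
        have hvΛ : (v : V) ∈ Λ := hspan.le v.2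
        refine ⟨(v : V) +ᵥ y, subset_closure hv, ?_⟩
        have hv' : (v : V) +ᵥ y = y + (v : V) := by
          simp [vadd_eq_add, add_comm]
        rw [hv', hgper y _ hvΛ]
      have hcomp : IsCompact (closure (ZSpan.fundamentalDomain bV)) :=
        (ZSpan.fundamentalDomain_isBounded bV).isCompact_closure
      exact ((hcomp.image hgdiff.continuous).isBounded).subset hsub
    -- Liouville: `g` is constant
    have hgx : g x = g 0 := hgdiff.apply_eq_apply_of_bounded hbdd x 0
    have h0 : g 0 = F t 0 := by simp [hg]
    have hsubng : F t x - x = F t 0 := by rw [← h0, ← hgx]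
    rw [sub_eq_iff_eq_add] at hsubng
    rw [hsubng, add_comm]
  constructor
  · intro t
    refine ⟨F t 0, fun x => ?_⟩
    rw [hlift t x, key t x]
  · intro hfix t
    have h0 : β t (QuotientAddGroup.mk (0 : V)) = 0 := by
      simpa using hfix t
    rw [hlift t 0, key t 0, zero_add] at h0
    have haΛ : F t 0 ∈ Λ := (QuotientAddGroup.eq_zero_iff _).mp h0
    funext q
    induction q using QuotientAddGroup.induction_on with
    | H x =>
      rw [hlift t x, key t x]
      simp only [id_eq]
      rw [QuotientAddGroup.mk_add]
      rw [(QuotientAddGroup.eq_zero_iff _).mpr haΛ, add_zero]
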